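/- For every n ≥ 2 there exist words u and v of length n over the binary alphabet Σ_2 such that lso(u,v) + lso(v,u) = ⌊4n/3⌋. In particular, for n = 3m (m ≥ 1) the pair (u,v) = (0^m 1^m 0^m, 1^m 0^m 1^m) satisfies lso(u,v) + lso(v,u) = 4m; for n = 3m+1 the pair (0^m 1^{m+1} 0^m, 1^{m+1} 0^m 1^m) satisfies lso(u,v) + lso(v,u) = 4m+1; and for n = 3m+2 the pair (0^m 1^{m+2} 0^m, 1^{m+2} 0^m 1^m) satisfies lso(u,v) + lso(v,u) = 4m+2. -/
import Mathlib


open Classical Finset Filter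

/-- A border of `w`: a non-empty word that is both a proper prefix and a suffix of `w`. -/
def IsBorder {k : ℕ} (w b : List (Fin k)) : Prop :=
  b ≠ [] ∧ b ≠ w ∧ b <+: w ∧ b <:+ w

/-- A word is unbordered if it has no border. -/
def Unbordered {k : ℕ} (w : List (Fin k)) : Prop :=
  ∀ b, ¬ IsBorder w b

/-- A right-border of `(u,v)`: a non-empty proper suffix of `u` that is a proper prefix of `v`. -/
def IsRightBorder {k : ℕ} (u v b : List (Fin k)) : Prop :=
  b ≠ [] ∧ b <:+ u ∧ b ≠ u ∧ b <+: v ∧ b ≠ v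

/-- A left-border of `(u,v)`: a non-empty proper prefix of `u` that is a proper suffix of `v`. -/
def IsLeftBorder {k : ℕ} (u v b : List (Fin k)) : Prop :=
  b ≠ [] ∧ b <+: u ∧ b ≠ u ∧ b <:+ v ∧ b ≠ v

def MutuallyBordered {k : ℕ} (u v : List (Fin k)) : Prop :=
  (∃ b, IsRightBorder u v b) ∧ (∃ b, IsLeftBorder u v b)

def MutuallyUnbordered {k : ℕ} (u v : List (Fin k)) : Prop :=
  (¬ ∃ b, IsRightBorder u v b) ∧ (¬ ∃ b, IsLeftBorder u v b)

def RightBordered {k : ℕ} (u v : List (Fin k)) : Prop :=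
  (∃ b, IsRightBorder u v b) ∧ (¬ ∃ b, IsLeftBorder u v b)

/-- `lso u v`: the length of the shortest right-border of `(u,v)`, or `0` if there is none. -/
noncomputable def lso {k : ℕ} (u v : List (Fin k)) : ℕ :=
  sInf {m | ∃ b : List (Fin k), IsRightBorder u v b ∧ b.length = m}

def IsShortestRightBorder {k : ℕ} (u v b : List (Fin k)) : Prop :=
  IsRightBorder u v b ∧ ∀ b', IsRightBorder u v b' → b.length ≤ b'.length

def IsShortestLeftBorder {k : ℕ} (u v b : List (Fin k)) : Prop :=
  IsLeftBorder u v b ∧ ∀ b', IsLeftBorder u v b' → b.length ≤ b'.length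

/-- The finite set of all length-`n` words over `Σ_k`. -/
def Words (k n : ℕ) : Finset (List (Fin k)) :=
  (Finset.univ : Finset (Fin n → Fin k)).image List.ofFn

/-- `UB k n`: the number of unbordered words of length `n` over `Σ_k`. -/
noncomputable def UB (k n : ℕ) : ℕ :=
  ((Words k n).filter Unbordered).card

/-- `M k n`: the number of mutually bordered pairs of length-`n` words over `Σ_k`. -/
noncomputable def M (k n : ℕ) : ℕ :=
  ((Words k n ×ˢ Words k n).filter (fun p => MutuallyBordered p.1 p.2)).card

/-- `R k n`: the number of right-bordered pairs of length-`n` words over `Σ_k`. -/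
noncomputable def R (k n : ℕ) : ℕ :=
  ((Words k n ×ˢ Words k n).filter (fun p => RightBordered p.1 p.2)).card

/-- `U k n`: the number of mutually unbordered pairs of length-`n` words over `Σ_k`. -/
noncomputable def U (k n : ℕ) : ℕ :=
  ((Words k n ×ˢ Words k n).filter (fun p => MutuallyUnbordered p.1 p.2)).card

/-- `G u v m`: the number of unbordered words of length `m` over `Σ_k` having
`u` as a prefix and `v` as a suffix. -/
noncomputable def G {k : ℕ} (u v : List (Fin k)) (m : ℕ) : ℕ :=
  ((Words k m).filter (fun w => Unbordered w ∧ u <+: w ∧ v <:+ w)).card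


theorem getElem3 {α : Type*} (a b c : ℕ) (x y z : α) (i : ℕ) (h1 : i < a+b+c) :
    (List.replicate a x ++ List.replicate b y ++ List.replicate c z)[i]'(by simp; omega) =
    if i < a then x else if i < a + b then y else z := by
  rcases Nat.lt_or_ge i a with h | h
  · rw [List.getElem_append_left (by simp; omega), List.getElem_append_left (by simpa using h),
      List.getElem_replicate]
    simp [h]
  · rcases Nat.lt_or_ge i (a+b) with h2 | h2
    · rw [List.getElem_append_left (by simp; omega), List.getElem_append_right (by simpa using h),
        List.getElem_replicate]
      rw [if_neg (by omega), if_pos h2]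
    · rw [List.getElem_append_right (by simp; omega), List.getElem_replicate]
      rw [if_neg (by omega), if_neg (by omega)]

theorem suffix_getElem {α : Type*} (l1 l2 : List α) (h : l1 <:+ l2) (i : ℕ) (hi : i < l1.length) :
    l1[i] = l2[l2.length - l1.length + i]'(by have := h.length_le; omega) := by
  obtain ⟨t, rfl⟩ := h
  have hlen : (t ++ l1).length - l1.length = t.length := by simp
  rw [List.getElem_append_right (by omega)]
  congr 1
  omega

theorem lso1 (a b c : ℕ) (ha : 1 ≤ a) (hb : 1 ≤ b) (hc : 1 ≤ c) :
    lso (List.replicate a (0:Fin 2) ++ List.replicate b 1 ++ List.replicate a 0)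
        (List.replicate b (1:Fin 2) ++ List.replicate a 0 ++ List.replicate c 1) = a + b := by
  have hmem : IsRightBorder (List.replicate a (0:Fin 2) ++ List.replicate b 1 ++ List.replicate a 0)
      (List.replicate b (1:Fin 2) ++ List.replicate a 0 ++ List.replicate c 1)
      (List.replicate b (1:Fin 2) ++ List.replicate a 0) := by
    refine ⟨?_, ⟨List.replicate a 0, by rw [← List.append_assoc]⟩, ?_, ⟨List.replicate c 1, rfl⟩, ?_⟩
    · intro h; apply_fun List.length at h; simp at h; omega
    · intro h; apply_fun List.length at h; simp at h; omega
    · intro h; apply_fun List.length at h; simp at h; omega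
  have hlow : ∀ b' : List (Fin 2),
      IsRightBorder (List.replicate a (0:Fin 2) ++ List.replicate b 1 ++ List.replicate a 0)
        (List.replicate b (1:Fin 2) ++ List.replicate a 0 ++ List.replicate c 1) b' →
      a + b ≤ b'.length := by
    rintro b' ⟨hne, hsuf, hnu, hpre, hnv⟩
    set ℓ := b'.length with hℓ
    have hl1 : 1 ≤ ℓ := List.length_pos_iff.2 hne
    have hlu : ℓ ≤ a + b + a := by have := hsuf.length_le; simp at this; omega
    have key : ∀ i, (hi : i < ℓ) →
        (if i < b then (1:Fin 2) else if i < b + a then 0 else 1) =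
        (if a + b + a - ℓ + i < a then (0:Fin 2) else if a + b + a - ℓ + i < a + b then 1 else 0) := by
      intro i hi
      rw [← getElem3 b a c (1:Fin 2) 0 1 i (by have := hpre.length_le; simp at this; omega),
          ← getElem3 a b a (0:Fin 2) 1 0 _ (by omega)]
      rw [← hpre.getElem hi]
      have h2 := suffix_getElem b' _ hsuf i hi
      simp only [List.length_append, List.length_replicate, ← hℓ] at h2
      exact h2
    have e0 := key 0 (by omega)
    rw [if_pos (show (0:ℕ) < b by omega)] at e0
    have h1 : a < ℓ ∧ ℓ ≤ a + b := by
      split_ifs at e0 with g1 g2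
      · exact absurd e0 (by decide)
      · omega
      · exact absurd e0 (by decide)
    by_contra hfin
    push_neg at hfin
    have e1 := key (ℓ - a) (by omega)
    rw [if_pos (by omega), if_neg (by omega), if_neg (by omega)] at e1
    exact absurd e1 (by decide)
  unfold lso
  refine le_antisymm (Nat.sInf_le ⟨_, hmem, by simp; ring⟩)
    (le_csInf ⟨_, _, hmem, rfl⟩ ?_)
  rintro m ⟨b', hb', rfl⟩
  exact hlow b' hb'

theorem lso2 (a b c : ℕ) (ha : 1 ≤ a) (hb : 1 ≤ b) (hc : 1 ≤ c) (hcb : c ≤ b) :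
    lso (List.replicate b (1:Fin 2) ++ List.replicate a 0 ++ List.replicate c 1)
        (List.replicate a (0:Fin 2) ++ List.replicate b 1 ++ List.replicate a 0) = a + c := by
  have hsplit : List.replicate b (1:Fin 2) = List.replicate c 1 ++ List.replicate (b-c) 1 := by
    rw [← List.replicate_add]; congr 1; omega
  have hmem : IsRightBorder (List.replicate b (1:Fin 2) ++ List.replicate a 0 ++ List.replicate c 1)
      (List.replicate a (0:Fin 2) ++ List.replicate b 1 ++ List.replicate a 0)
      (List.replicate a (0:Fin 2) ++ List.replicate c 1) := by
    refine ⟨?_, ⟨List.replicate b 1, by rw [← List.append_assoc]⟩, ?_,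
      ⟨List.replicate (b-c) 1 ++ List.replicate a 0, by rw [hsplit]; simp only [List.append_assoc]⟩, ?_⟩
    · intro h; apply_fun List.length at h; simp at h; omega
    · intro h; apply_fun List.length at h; simp at h; omega
    · intro h; apply_fun List.length at h; simp at h; omega
  have hlow : ∀ b' : List (Fin 2),
      IsRightBorder (List.replicate b (1:Fin 2) ++ List.replicate a 0 ++ List.replicate c 1)
        (List.replicate a (0:Fin 2) ++ List.replicate b 1 ++ List.replicate a 0) b' →
      a + c ≤ b'.length := by
    rintro b' ⟨hne, hsuf, hnu, hpre, hnv⟩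
    set ℓ := b'.length with hℓ
    have hl1 : 1 ≤ ℓ := List.length_pos_iff.2 hne
    have hlu : ℓ ≤ b + a + c := by have := hsuf.length_le; simp at this; omega
    have key : ∀ i, (hi : i < ℓ) →
        (if i < a then (0:Fin 2) else if i < a + b then 1 else 0) =
        (if b + a + c - ℓ + i < b then (1:Fin 2) else if b + a + c - ℓ + i < b + a then 0 else 1) := by
      intro i hi
      rw [← getElem3 a b a (0:Fin 2) 1 0 i (by have := hpre.length_le; simp at this; omega),
          ← getElem3 b a c (1:Fin 2) 0 1 _ (by omega)]
      rw [← hpre.getElem hi]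
      have h2 := suffix_getElem b' _ hsuf i hi
      simp only [List.length_append, List.length_replicate, ← hℓ] at h2
      exact h2
    have e0 := key 0 (by omega)
    rw [if_pos (show (0:ℕ) < a by omega)] at e0
    have h1 : c < ℓ ∧ ℓ ≤ a + c := by
      split_ifs at e0 with g1 g2
      · exact absurd e0 (by decide)
      · omega
      · exact absurd e0 (by decide)
    by_contra hfin
    push_neg at hfin
    have e1 := key (ℓ - c) (by omega)
    rw [if_pos (by omega), if_neg (by omega), if_neg (by omega)] at e1
    exact absurd e1 (by decide)
  unfold lso
  refine le_antisymm (Nat.sInf_le ⟨_, hmem, by simp⟩)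
    (le_csInf ⟨_, _, hmem, rfl⟩ ?_)
  rintro m ⟨b', hb', rfl⟩
  exact hlow b' hb'

theorem lso11 : lso (List.replicate 2 (1:Fin 2)) (List.replicate 2 1) = 1 := by
  have hmem : IsRightBorder (List.replicate 2 (1:Fin 2)) (List.replicate 2 1) [1] := by
    refine ⟨by simp, ⟨[1], by decide⟩, by decide, ⟨[1], by decide⟩, by decide⟩
  unfold lso
  refine le_antisymm (Nat.sInf_le ⟨_, hmem, rfl⟩) (le_csInf ⟨_, _, hmem, rfl⟩ ?_)
  rintro m ⟨b', ⟨hne, _⟩, rfl⟩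
  exact List.length_pos_iff.2 hne

theorem case1 : ∀ m : ℕ, 1 ≤ m →
      lso (List.replicate m (0 : Fin 2) ++ List.replicate m 1 ++ List.replicate m 0)
          (List.replicate m (1 : Fin 2) ++ List.replicate m 0 ++ List.replicate m 1) +
      lso (List.replicate m (1 : Fin 2) ++ List.replicate m 0 ++ List.replicate m 1)
          (List.replicate m (0 : Fin 2) ++ List.replicate m 1 ++ List.replicate m 0)
        = 4 * m := by
  intro m hm
  rw [lso1 m m m hm hm hm, lso2 m m m hm hm hm le_rfl]
  omega

theorem case2 : ∀ m : ℕ, 1 ≤ m →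
      lso (List.replicate m (0 : Fin 2) ++ List.replicate (m + 1) 1 ++ List.replicate m 0)
          (List.replicate (m + 1) (1 : Fin 2) ++ List.replicate m 0 ++ List.replicate m 1) +
      lso (List.replicate (m + 1) (1 : Fin 2) ++ List.replicate m 0 ++ List.replicate m 1)
          (List.replicate m (0 : Fin 2) ++ List.replicate (m + 1) 1 ++ List.replicate m 0)
        = 4 * m + 1 := by
  intro m hm
  rw [lso1 m (m+1) m hm (by omega) hm, lso2 m (m+1) m hm (by omega) hm (by omega)]
  omega

theorem case3 : ∀ m : ℕ,
      lso (List.replicate m (0 : Fin 2) ++ List.replicate (m + 2) 1 ++ List.replicate m 0)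
          (List.replicate (m + 2) (1 : Fin 2) ++ List.replicate m 0 ++ List.replicate m 1) +
      lso (List.replicate (m + 2) (1 : Fin 2) ++ List.replicate m 0 ++ List.replicate m 1)
          (List.replicate m (0 : Fin 2) ++ List.replicate (m + 2) 1 ++ List.replicate m 0)
        = 4 * m + 2 := by
  intro m
  rcases Nat.eq_zero_or_pos m with rfl | hm
  · simp only [List.replicate_zero, List.nil_append, List.append_nil, Nat.zero_add]
    rw [lso11]
  · rw [lso1 m (m+2) m hm (by omega) hm, lso2 m (m+2) m hm (by omega) hm (by omega)]
    omega

theorem stmt4 :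
    (∀ n : ℕ, 2 ≤ n → ∃ u v : List (Fin 2), u.length = n ∧ v.length = n ∧
      lso u v + lso v u = 4 * n / 3) ∧
    (∀ m : ℕ, 1 ≤ m →
      lso (List.replicate m (0 : Fin 2) ++ List.replicate m 1 ++ List.replicate m 0)
          (List.replicate m (1 : Fin 2) ++ List.replicate m 0 ++ List.replicate m 1) +
      lso (List.replicate m (1 : Fin 2) ++ List.replicate m 0 ++ List.replicate m 1)
          (List.replicate m (0 : Fin 2) ++ List.replicate m 1 ++ List.replicate m 0)
        = 4 * m) ∧
    (∀ m : ℕ, 1 ≤ m →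
      lso (List.replicate m (0 : Fin 2) ++ List.replicate (m + 1) 1 ++ List.replicate m 0)
          (List.replicate (m + 1) (1 : Fin 2) ++ List.replicate m 0 ++ List.replicate m 1) +
      lso (List.replicate (m + 1) (1 : Fin 2) ++ List.replicate m 0 ++ List.replicate m 1)
          (List.replicate m (0 : Fin 2) ++ List.replicate (m + 1) 1 ++ List.replicate m 0)
        = 4 * m + 1) ∧
    (∀ m : ℕ,
      lso (List.replicate m (0 : Fin 2) ++ List.replicate (m + 2) 1 ++ List.replicate m 0)
          (List.replicate (m + 2) (1 : Fin 2) ++ List.replicate m 0 ++ List.replicate m 1) +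
      lso (List.replicate (m + 2) (1 : Fin 2) ++ List.replicate m 0 ++ List.replicate m 1)
          (List.replicate m (0 : Fin 2) ++ List.replicate (m + 2) 1 ++ List.replicate m 0)
        = 4 * m + 2) := by
  refine ⟨?_, case1, case2, case3⟩
  intro n hn
  set m := n / 3 with hm
  have hlt : n % 3 = 0 ∨ n % 3 = 1 ∨ n % 3 = 2 := by omega
  rcases hlt with h | h | h
  · refine ⟨List.replicate m (0 : Fin 2) ++ List.replicate m 1 ++ List.replicate m 0,
      List.replicate m (1 : Fin 2) ++ List.replicate m 0 ++ List.replicate m 1,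
      by simp; omega, by simp; omega, ?_⟩
    rw [case1 m (by omega)]; omega
  · refine ⟨List.replicate m (0 : Fin 2) ++ List.replicate (m + 1) 1 ++ List.replicate m 0,
      List.replicate (m + 1) (1 : Fin 2) ++ List.replicate m 0 ++ List.replicate m 1,
      by simp; omega, by simp; omega, ?_⟩
    rw [case2 m (by omega)]; omega
  · refine ⟨List.replicate m (0 : Fin 2) ++ List.replicate (m + 2) 1 ++ List.replicate m 0,
      List.replicate (m + 2) (1 : Fin 2) ++ List.replicate m 0 ++ List.replicate m 1,
      by simp; omega, by simp; omega, ?_⟩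
    rw [case3 m]; omega
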